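/- For every integer n ≥ 2, any two distinct vertices u and v of the augmented 3-ary n-cube AQ_{n,3} have at most 6 common neighbors. -/

import Mathlib

open SimpleGraph

/-- The augmented `k`-ary `n`-cube.  Vertices are `n`-tuples over `ZMod k`;
the `Fin n` index `j` corresponds to the coordinate `a_{j+1}` of the paper. -/
def AQ (n k : ℕ) : SimpleGraph (Fin n → ZMod k) where
  Adj u v := u ≠ v ∧
    ((∃ i : Fin n, (v i = u i + 1 ∨ v i = u i - 1) ∧ ∀ j, j ≠ i → v j = u j) ∨
     (∃ i : Fin n, 1 ≤ i.val ∧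
       ((∀ j, j ≤ i → v j = u j + 1) ∨ (∀ j, j ≤ i → v j = u j - 1)) ∧
       (∀ j, i < j → v j = u j)))
  symm := by
    refine ⟨?_⟩
    rintro u v ⟨hne, h⟩
    refine ⟨hne.symm, ?_⟩
    rcases h with ⟨i, hi, hj⟩ | ⟨i, hi1, hpm, hj⟩
    · left
      refine ⟨i, ?_, fun j hj' => (hj j hj').symm⟩
      rcases hi with h | h
      · right; rw [h]; ring
      · left; rw [h]; ring
    · right
      refine ⟨i, hi1, ?_, fun j hj' => (hj j hj').symm⟩
      rcases hpm with h | h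
      · right; intro j hj'; rw [h j hj']; ring
      · left; intro j hj'; rw [h j hj']; ring
  loopless := ⟨fun u h => h.1 rfl⟩

/-- Degree of a vertex, as the cardinality of its neighbour set. -/
noncomputable def deg {V : Type*} (G : SimpleGraph V) (x : V) : ℕ :=
  (G.neighborSet x).ncard

/-- `G` is strongly Menger connected: any two distinct vertices `x, y` are joined by
`min (deg x) (deg y)` pairwise distinct, pairwise internally vertex-disjoint paths. -/
def StronglyMengerConnected {V : Type*} (G : SimpleGraph V) : Prop :=
  ∀ x y : V, x ≠ y →
    ∃ P : Fin (min (deg G x) (deg G y)) → G.Walk x y,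
      (∀ i, (P i).IsPath) ∧
      (∀ i j, i ≠ j → P i ≠ P j) ∧
      (∀ i j, i ≠ j → ∀ w, w ∈ (P i).support → w ∈ (P j).support → w = x ∨ w = y)

/-- `G` is strongly Menger edge connected: any two distinct vertices `x, y` are joined
by `min (deg x) (deg y)` pairwise edge-disjoint paths. -/
def StronglyMengerEdgeConnected {V : Type*} (G : SimpleGraph V) : Prop :=
  ∀ x y : V, x ≠ y →
    ∃ P : Fin (min (deg G x) (deg G y)) → G.Walk x y,
      (∀ i, (P i).IsPath) ∧
      (∀ i j, i ≠ j → ∀ e, e ∈ (P i).edges → e ∉ (P j).edges)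

def Evec (n : ℕ) (i : Fin n) : Fin n → ZMod 3 := fun j => if j = i then 1 else 0
def Bvec (n : ℕ) (i : Fin n) : Fin n → ZMod 3 := fun j => if j ≤ i then 1 else 0

def InS (n : ℕ) (s : Fin n → ZMod 3) : Prop :=
  ∃ c : ZMod 3, (c = 1 ∨ c = -1) ∧ ∃ i : Fin n,
    (s = c • Evec n i ∨ (1 ≤ i.val ∧ s = c • Bvec n i))

lemma InS_spec {n : ℕ} {s : Fin n → ZMod 3} (hs : InS n s) :
    ∃ c : ZMod 3, ∃ i : Fin n, (c = 1 ∨ c = -1) ∧ s i = c ∧ (∀ j, i < j → s j = 0) ∧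
      (s = c • Evec n i ∨ (1 ≤ i.val ∧ s = c • Bvec n i)) := by
  obtain ⟨c, hc, i, h⟩ := hs
  refine ⟨c, i, hc, ?_, ?_, h⟩
  · rcases h with h | ⟨_, h⟩ <;> simp [h, Evec, Bvec]
  · intro j hj
    rcases h with h | ⟨_, h⟩
    · simp [h, Evec, (ne_of_gt hj)]
    · simp [h, Bvec, not_le.mpr hj]

lemma key_low {n : ℕ} {d : Fin n → ZMod 3} {T : Fin n} (hdT : d T ≠ 0)
    (hTop : ∀ j, T < j → d j = 0) {s : Fin n → ZMod 3} (hs' : InS n (s - d))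
    (hsT : s T = 0) (hsupp : ∀ j, T < j → s j = 0) :
    s = d - d T • Evec n T ∨ s = d - d T • Bvec n T := by
  obtain ⟨c', i', hc', hval, hsupp', hform'⟩ := InS_spec hs'
  have hc0 : c' ≠ 0 := by rcases hc' with h | h <;> simp [h]
  have hs'T : (s - d) T = -d T := by simp [hsT]
  have hTi' : T ≤ i' := by
    by_contra h
    push_neg at h
    have h2 := hsupp' T h
    rw [hs'T] at h2
    exact hdT (neg_eq_zero.mp h2)
  have hi' : i' = T := by
    rcases eq_or_lt_of_le hTi' with h | h
    · exact h.symm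
    · exfalso
      have h2 : (s - d) i' = 0 := by simp [hsupp i' h, hTop i' h]
      rw [hval] at h2
      exact hc0 h2
  rw [hi'] at hval hform'
  have hc'val : c' = -d T := by rw [← hval, hs'T]
  rcases hform' with h | ⟨_, h⟩
  · left
    have := sub_eq_iff_eq_add.mp h
    rw [this, hc'val, neg_smul]
    abel
  · right
    have := sub_eq_iff_eq_add.mp h
    rw [this, hc'val, neg_smul]
    abel

lemma key_high {n : ℕ} {d : Fin n → ZMod 3} {T : Fin n} (hdT : d T ≠ 0)
    (hTop : ∀ j, T < j → d j = 0) {s : Fin n → ZMod 3} {c : ZMod 3} {i : Fin n}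
    (hc : c = 1 ∨ c = -1) (hsi : s i = c) (hsupp : ∀ j, i < j → s j = 0)
    (hform : s = c • Evec n i ∨ (1 ≤ i.val ∧ s = c • Bvec n i))
    (hs' : InS n (s - d)) (hTi : T < i) :
    ∃ δ : ZMod 3, δ ≠ 0 ∧ d = δ • Bvec n T ∧ T.val + 1 = i.val ∧
      ((δ = -c ∧ s = c • Evec n i) ∨ (δ = c ∧ s = c • Bvec n i)) := by
  have hc0 : c ≠ 0 := by rcases hc with h | h <;> simp [h]
  obtain ⟨c', i', hc', hval', hsupp', hform'⟩ := InS_spec hs'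
  have hc0' : c' ≠ 0 := by rcases hc' with h | h <;> simp [h]
  have hdi : d i = 0 := hTop i hTi
  have hs'i : (s - d) i = c := by simp [hsi, hdi]
  have hii' : i ≤ i' := by
    by_contra h
    push_neg at h
    have h2 := hsupp' i h
    rw [hs'i] at h2
    exact hc0 h2
  have hi' : i' = i := by
    rcases eq_or_lt_of_le hii' with h | h
    · exact h.symm
    · exfalso
      have h2 : (s - d) i' = 0 := by simp [hsupp i' h, hTop i' (hTi.trans h)]
      rw [hval'] at h2
      exact hc0' h2
  rw [hi'] at hval' hform'
  have hcc : c' = c := by rw [← hval', hs'i]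
  rw [hcc] at hform'
  -- i.val ≥ 1 in the useful cases
  rcases hform with hf | ⟨hi1, hf⟩ <;> rcases hform' with hf' | ⟨hi1', hf'⟩
  · -- both Evec : d = 0, contradiction
    exfalso
    have hd0 : d = 0 := by
      have h3 : s - d = s := by rw [hf', ← hf]
      exact sub_eq_self.mp h3
    exact hdT (by simp [hd0])
  · -- s = c•E i, s - d = c•B i : d = (-c) • Bvec (i-1), δ = -c
    have hi1 := hi1'
    set tm : Fin n := ⟨i.val - 1, Nat.lt_of_le_of_lt (Nat.sub_le i.val 1) i.isLt⟩ with htm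
    have hd : d = (-c) • Bvec n tm := by
      funext j
      have hdj : d j = c * Evec n i j - c * Bvec n i j := by
        have h1 : d j = s j - (s - d) j := by simp
        rw [h1, congrFun hf j, congrFun hf' j]
        simp
      rw [hdj]
      show _ = (-c) * Bvec n tm j
      by_cases hj : j ≤ tm
      · have hjlt : j < i := by
          have : j.val ≤ i.val - 1 := hj
          exact Fin.lt_def.mpr (by omega)
        simp [Evec, Bvec, ne_of_lt hjlt, le_of_lt hjlt, hj]
        try ring
      · have hij : i ≤ j := by
          have : ¬ j.val ≤ i.val - 1 := hj
          exact Fin.le_def.mpr (by omega)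
        rcases eq_or_lt_of_le hij with h | h
        · subst h
          simp [Evec, Bvec, hj]
        · simp [Evec, Bvec, (ne_of_gt h), not_le.mpr h, hj]
    have htmT : tm ≤ T := by
      by_contra h
      push_neg at h
      have := hTop tm h
      rw [hd] at this
      simp [Bvec] at this
      exact hc0 this
    have hTtm : T ≤ tm := by
      by_contra h
      push_neg at h
      rw [hd] at hdT
      simp [Bvec, not_le.mpr h] at hdT
    have hT : T = tm := le_antisymm hTtm htmT
    refine ⟨-c, neg_ne_zero.mpr hc0, by rw [hT]; exact hd, ?_, Or.inl ⟨rfl, hf⟩⟩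
    rw [hT]
    show i.val - 1 + 1 = i.val
    omega
  · -- s = c•B i, s - d = c•E i : d = c • Bvec (i-1), δ = c
    set tm : Fin n := ⟨i.val - 1, Nat.lt_of_le_of_lt (Nat.sub_le i.val 1) i.isLt⟩ with htm
    have hd : d = c • Bvec n tm := by
      funext j
      have hdj : d j = c * Bvec n i j - c * Evec n i j := by
        have h1 : d j = s j - (s - d) j := by simp
        rw [h1, congrFun hf j, congrFun hf' j]
        simp
      rw [hdj]
      show _ = c * Bvec n tm j
      by_cases hj : j ≤ tm
      · have hjlt : j < i := by
          have : j.val ≤ i.val - 1 := hj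
          exact Fin.lt_def.mpr (by omega)
        simp [Evec, Bvec, ne_of_lt hjlt, le_of_lt hjlt, hj]
      · have hij : i ≤ j := by
          have : ¬ j.val ≤ i.val - 1 := hj
          exact Fin.le_def.mpr (by omega)
        rcases eq_or_lt_of_le hij with h | h
        · subst h
          simp [Evec, Bvec, hj]
        · simp [Evec, Bvec, (ne_of_gt h), not_le.mpr h, hj]
    have htmT : tm ≤ T := by
      by_contra h
      push_neg at h
      have := hTop tm h
      rw [hd] at this
      simp [Bvec] at this
      exact hc0 this
    have hTtm : T ≤ tm := by
      by_contra h
      push_neg at h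
      rw [hd] at hdT
      simp [Bvec, not_le.mpr h] at hdT
    have hT : T = tm := le_antisymm hTtm htmT
    refine ⟨c, hc0, by rw [hT]; exact hd, ?_, Or.inr ⟨rfl, hf⟩⟩
    rw [hT]
    show i.val - 1 + 1 = i.val
    omega
  · -- both Bvec : d = 0, contradiction
    exfalso
    have hd0 : d = 0 := by
      have h3 : s - d = s := by rw [hf', ← hf]
      exact sub_eq_self.mp h3
    exact hdT (by simp [hd0])

lemma zmod3_cases : ∀ c γ : ZMod 3, (c = 1 ∨ c = -1) → γ ≠ 0 → c = γ ∨ c = -γ := by decide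

lemma zmod3_sub : ∀ γ : ZMod 3, -γ - γ = γ := by decide

lemma zmod3_neg : ∀ γ : ZMod 3, γ ≠ 0 → ¬(-γ = γ) := by decide

lemma keyB {n : ℕ} {d : Fin n → ZMod 3} {T : Fin n} (hdT : d T ≠ 0)
    (hTop : ∀ j, T < j → d j = 0) (hB : ∀ γ : ZMod 3, γ ≠ 0 → d ≠ γ • Bvec n T)
    {s : Fin n → ZMod 3} (hs : InS n s) (hs' : InS n (s - d)) :
    s = Evec n T ∨ s = -Evec n T ∨ s = Bvec n T ∨ s = -Bvec n T ∨
      s = d - d T • Evec n T ∨ s = d - d T • Bvec n T := by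
  obtain ⟨c, i, hc, hsi, hsupp, hform⟩ := InS_spec hs
  rcases lt_trichotomy i T with h | h | h
  · have h1 : s T = 0 := hsupp T h
    have h2 : ∀ j, T < j → s j = 0 := fun j hj => hsupp j (h.trans hj)
    rcases key_low hdT hTop hs' h1 h2 with h3 | h3
    · exact Or.inr (Or.inr (Or.inr (Or.inr (Or.inl h3))))
    · exact Or.inr (Or.inr (Or.inr (Or.inr (Or.inr h3))))
  · rw [h] at hform
    rcases hform with hf | ⟨_, hf⟩ <;> rcases hc with h1 | h1
    · exact Or.inl (by rw [hf, h1, one_smul])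
    · exact Or.inr (Or.inl (by rw [hf, h1, neg_one_smul]))
    · exact Or.inr (Or.inr (Or.inl (by rw [hf, h1, one_smul])))
    · exact Or.inr (Or.inr (Or.inr (Or.inl (by rw [hf, h1, neg_one_smul]))))
  · exfalso
    obtain ⟨δ, hδ0, hdδ, _, _⟩ := key_high hdT hTop hc hsi hsupp hform hs' h
    exact hB δ hδ0 hdδ

lemma keyA {n : ℕ} {d : Fin n → ZMod 3} {T : Fin n} (hdT : d T ≠ 0)
    (hTop : ∀ j, T < j → d j = 0) {γ : ZMod 3} (hγ : γ ≠ 0)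
    (hdγ : d = γ • Bvec n T) {t₁ : Fin n}
    (ht₁ : ∀ h : T.val + 1 < n, t₁ = ⟨T.val + 1, h⟩)
    {s : Fin n → ZMod 3} (hs : InS n s) (hs' : InS n (s - d)) :
    s = γ • Evec n T ∨ s = -γ • Bvec n T ∨ s = d - d T • Evec n T ∨
      s = d - d T • Bvec n T ∨ s = -γ • Evec n t₁ ∨ s = γ • Bvec n t₁ := by
  obtain ⟨c, i, hc, hsi, hsupp, hform⟩ := InS_spec hs
  have hc0 : c ≠ 0 := by rcases hc with h | h <;> simp [h]
  rcases lt_trichotomy i T with h | h | h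
  · have h1 : s T = 0 := hsupp T h
    have h2 : ∀ j, T < j → s j = 0 := fun j hj => hsupp j (h.trans hj)
    rcases key_low hdT hTop hs' h1 h2 with h3 | h3
    · exact Or.inr (Or.inr (Or.inl h3))
    · exact Or.inr (Or.inr (Or.inr (Or.inl h3)))
  · rw [h] at hform
    rcases hform with hf | ⟨hT1, hf⟩
    · -- s = c • Evec n T
      by_cases hcγ : c = γ
      · exact Or.inl (by rw [hf, hcγ])
      · have hcγ' : c = -γ := (zmod3_cases c γ hc hγ).resolve_left hcγ
        have hsdT : (s - d) T = c - γ := by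
          rw [hf, hdγ]
          simp [Evec, Bvec]
        have hne : c - γ ≠ 0 := by
          rw [hcγ', zmod3_sub]
          exact hγ
        obtain ⟨c', i', hc', hval', hsupp', hform'⟩ := InS_spec hs'
        have hc0' : c' ≠ 0 := by rcases hc' with h2 | h2 <;> simp [h2]
        have hTi' : T ≤ i' := by
          by_contra h2
          push_neg at h2
          have h3 := hsupp' T h2
          rw [hsdT] at h3
          exact hne h3
        have hi' : i' = T := by
          rcases eq_or_lt_of_le hTi' with h2 | h2
          · exact h2.symm
          · exfalso
            have h3 : s i' = 0 := by rw [hf]; simp [Evec, (ne_of_gt h2)]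
            have h4 : (s - d) i' = 0 := by simp [h3, hTop i' h2]
            rw [hval'] at h4
            exact hc0' h4
        by_cases hT0 : (T : ℕ) = 0
        · refine Or.inr (Or.inl ?_)
          rw [hf, hcγ']
          congr 1
          funext j
          have : j = T ↔ j ≤ T := by
            rw [Fin.ext_iff, Fin.le_def, hT0]
            omega
          simp [Evec, Bvec, this]
        · exfalso
          have hn0 : 0 < n := Nat.lt_of_le_of_lt (Nat.zero_le T.val) T.isLt
          set j0 : Fin n := ⟨0, hn0⟩ with hj0
          have hj0T : j0 < T := Fin.lt_def.mpr (show 0 < T.val from Nat.pos_of_ne_zero hT0)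
          have h0 : (s - d) j0 = -γ := by
            rw [hf, hdγ]
            simp [Evec, Bvec, ne_of_lt hj0T, le_of_lt hj0T]
          rw [hi'] at hform'
          rcases hform' with hf' | ⟨_, hf'⟩
          · have h2 := congrFun hf' j0
            rw [h0] at h2
            simp [Evec, ne_of_lt hj0T] at h2
            exact hγ h2
          · have h2 := congrFun hf' j0
            rw [h0] at h2
            simp [Bvec, le_of_lt hj0T] at h2
            -- h2 : -γ = c'
            have h3 : c' = c - γ := by
              rw [hi'] at hval'
              rw [← hval', hsdT]
            rw [h3, hcγ'] at h2
            -- h2 : -γ = -γ - γ = γ (zmod3_sub)  → -γ = γ → contradiction? -γ - γ = γ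
            rw [zmod3_sub] at h2
            -- h2 : -γ = γ → 2γ = 0 → γ = 0 in ZMod 3
            exact zmod3_neg γ hγ h2
    · -- s = c • Bvec n T
      rcases zmod3_cases c γ hc hγ with hcγ | hcγ
      · exfalso
        have hsd : s - d = 0 := by
          rw [hf, hdγ, hcγ]
          exact sub_self _
        obtain ⟨c', i', hc', hval', _, _⟩ := InS_spec hs'
        have hc0' : c' ≠ 0 := by rcases hc' with h2 | h2 <;> simp [h2]
        rw [hsd] at hval'
        exact hc0' hval'.symm
      · exact Or.inr (Or.inl (by rw [hf, hcγ]))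
  · obtain ⟨δ, hδ0, hdδ, hval, hcase⟩ := key_high hdT hTop hc hsi hsupp hform hs' h
    have hγδ : γ = δ := by
      have h2 := congrFun (hdγ.symm.trans hdδ) T
      simpa [Bvec] using h2
    have hlt : T.val + 1 < n := by rw [hval]; exact i.isLt
    have hit : i = t₁ := by
      rw [ht₁ hlt]
      exact Fin.ext (show i.val = T.val + 1 by omega)
    rcases hcase with ⟨hδc, hf⟩ | ⟨hδc, hf⟩
    · refine Or.inr (Or.inr (Or.inr (Or.inr (Or.inl ?_))))
      rw [hf, hit]
      congr 1
      rw [hγδ, hδc, neg_neg]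
    · refine Or.inr (Or.inr (Or.inr (Or.inr (Or.inr ?_))))
      rw [hf, hit]
      congr 1
      rw [hγδ, hδc]

lemma adj_iff {n : ℕ} (u v : Fin n → ZMod 3) : (AQ n 3).Adj u v ↔ InS n (v - u) := by
  show (u ≠ v ∧ _) ↔ _
  constructor
  · rintro ⟨hne, h⟩
    rcases h with ⟨i, h1 | h1, hj⟩ | ⟨i, hi1, hp | hp, hj⟩
    · exact ⟨1, Or.inl rfl, i, Or.inl (by
        funext j; by_cases hji : j = i
        · subst hji; simp [Evec, h1]
        · simp [Evec, hji, hj j hji])⟩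
    · exact ⟨-1, Or.inr rfl, i, Or.inl (by
        funext j; by_cases hji : j = i
        · subst hji; simp [Evec, h1]
        · simp [Evec, hji, hj j hji])⟩
    · exact ⟨1, Or.inl rfl, i, Or.inr ⟨hi1, by
        funext j; by_cases hji : j ≤ i
        · simp [Bvec, hji, hp j hji]
        · simp [Bvec, hji, hj j (not_le.mp hji)]⟩⟩
    · exact ⟨-1, Or.inr rfl, i, Or.inr ⟨hi1, by
        funext j; by_cases hji : j ≤ i
        · simp [Bvec, hji, hp j hji]
        · simp [Bvec, hji, hj j (not_le.mp hji)]⟩⟩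
  · rintro ⟨c, hc, i, h⟩
    have hc0 : c ≠ 0 := by rcases hc with h | h <;> simp [h]
    constructor
    · intro he
      have : v - u = 0 := by rw [he]; abel
      rcases h with h | ⟨_, h⟩
      · have := congrFun (this ▸ h.symm) i
        simp [Evec] at this; exact hc0 this
      · have := congrFun (this ▸ h.symm) i
        simp [Bvec] at this; exact hc0 this
    rcases h with h | ⟨hi1, h⟩
    · left
      refine ⟨i, ?_, ?_⟩
      · have hvi : v i - u i = c := by have := congrFun h i; simpa [Evec] using this
        rcases hc with hc1 | hc1
        · left; rw [← hc1, ← hvi]; ring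
        · right; rw [hc1] at hvi; linear_combination hvi
      · intro j hji
        have := congrFun h j
        simp [Evec, hji] at this
        linear_combination (norm := ring_nf) this  -- v j - u j = 0 → v j = u j
    · right
      refine ⟨i, hi1, ?_, ?_⟩
      · rcases hc with hc1 | hc1
        · left; intro j hji
          have := congrFun h j; simp [Bvec, hji, hc1] at this
          linear_combination this
        · right; intro j hji
          have := congrFun h j; simp [Bvec, hji, hc1] at this
          linear_combination this
      · intro j hji
        have := congrFun h j
        simp [Bvec, not_le.mpr hji] at this
        linear_combination this


lemma ncard_le_six {α : Type*} (a b c d e f : α) : ({a, b, c, d, e, f} : Set α).ncard ≤ 6 := by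
  have h1 := Set.ncard_insert_le a ({b, c, d, e, f} : Set α)
  have h2 := Set.ncard_insert_le b ({c, d, e, f} : Set α)
  have h3 := Set.ncard_insert_le c ({d, e, f} : Set α)
  have h4 := Set.ncard_insert_le d ({e, f} : Set α)
  have h5 := Set.ncard_insert_le e ({f} : Set α)
  have h6 := Set.ncard_singleton f
  omega

/-- For every integer `n ≥ 2`, any two distinct vertices of `AQ_{n,3}` have at most `6`
common neighbours. -/
theorem AQ_k3_common_neighbors_le (n : ℕ) (hn : 2 ≤ n) (u v : Fin n → ZMod 3)
    (huv : u ≠ v) :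
    ((AQ n 3).neighborSet u ∩ (AQ n 3).neighborSet v).ncard ≤ 6 := by
  classical
  have hd0 : v - u ≠ 0 := sub_ne_zero_of_ne (Ne.symm huv)
  set d := v - u with hd
  obtain ⟨i0, hi0⟩ := Function.ne_iff.mp hd0
  have hi0' : d i0 ≠ 0 := by simpa using hi0
  have hFne : (Finset.univ.filter (fun i => d i ≠ 0)).Nonempty := ⟨i0, by simp [hi0']⟩
  set T := (Finset.univ.filter (fun i => d i ≠ 0)).max' hFne with hT
  have hdT : d T ≠ 0 := by
    have := (Finset.univ.filter (fun i => d i ≠ 0)).max'_mem hFne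
    simpa using this
  have hTop : ∀ j, T < j → d j = 0 := by
    intro j hj
    by_contra h
    have hjF : j ∈ Finset.univ.filter (fun i => d i ≠ 0) := by simp [h]
    exact absurd (Finset.le_max' _ j hjF) (not_le.mpr hj)
  have hmem : ∀ w ∈ (AQ n 3).neighborSet u ∩ (AQ n 3).neighborSet v,
      InS n (w - u) ∧ InS n ((w - u) - d) := by
    intro w hw
    obtain ⟨h1, h2⟩ := hw
    refine ⟨(adj_iff u w).mp h1, ?_⟩
    have h3 : (w - u) - d = w - v := by rw [hd]; abel
    rw [h3]
    exact (adj_iff v w).mp h2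
  set t₁ : Fin n := if h : T.val + 1 < n then ⟨T.val + 1, h⟩ else T with ht₁def
  have ht₁ : ∀ h : T.val + 1 < n, t₁ = ⟨T.val + 1, h⟩ := fun h => by
    rw [ht₁def]; exact dif_pos h
  by_cases hA : ∃ γ : ZMod 3, γ ≠ 0 ∧ d = γ • Bvec n T
  · obtain ⟨γ, hγ, hdγ⟩ := hA
    have hsub : (AQ n 3).neighborSet u ∩ (AQ n 3).neighborSet v ⊆
        ({u + γ • Evec n T, u + -γ • Bvec n T, u + (d - d T • Evec n T),
          u + (d - d T • Bvec n T), u + -γ • Evec n t₁, u + γ • Bvec n t₁} : Set _) := by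
      intro w hw
      obtain ⟨hs, hs'⟩ := hmem w hw
      simp only [Set.mem_insert_iff, Set.mem_singleton_iff]
      rcases keyA hdT hTop hγ hdγ ht₁ hs hs' with h | h | h | h | h | h
      · exact Or.inl (sub_eq_iff_eq_add'.mp h)
      · exact Or.inr (Or.inl (sub_eq_iff_eq_add'.mp h))
      · exact Or.inr (Or.inr (Or.inl (sub_eq_iff_eq_add'.mp h)))
      · exact Or.inr (Or.inr (Or.inr (Or.inl (sub_eq_iff_eq_add'.mp h))))
      · exact Or.inr (Or.inr (Or.inr (Or.inr (Or.inl (sub_eq_iff_eq_add'.mp h)))))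
      · exact Or.inr (Or.inr (Or.inr (Or.inr (Or.inr (sub_eq_iff_eq_add'.mp h)))))
    exact le_trans (Set.ncard_le_ncard hsub (Set.toFinite _)) (ncard_le_six _ _ _ _ _ _)
  · push_neg at hA
    have hB : ∀ γ : ZMod 3, γ ≠ 0 → d ≠ γ • Bvec n T := hA
    have hsub : (AQ n 3).neighborSet u ∩ (AQ n 3).neighborSet v ⊆
        ({u + Evec n T, u + -Evec n T, u + Bvec n T, u + -Bvec n T,
          u + (d - d T • Evec n T), u + (d - d T • Bvec n T)} : Set _) := by
      intro w hw
      obtain ⟨hs, hs'⟩ := hmem w hw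
      simp only [Set.mem_insert_iff, Set.mem_singleton_iff]
      rcases keyB hdT hTop hB hs hs' with h | h | h | h | h | h
      · exact Or.inl (sub_eq_iff_eq_add'.mp h)
      · exact Or.inr (Or.inl (sub_eq_iff_eq_add'.mp h))
      · exact Or.inr (Or.inr (Or.inl (sub_eq_iff_eq_add'.mp h)))
      · exact Or.inr (Or.inr (Or.inr (Or.inl (sub_eq_iff_eq_add'.mp h))))
      · exact Or.inr (Or.inr (Or.inr (Or.inr (Or.inl (sub_eq_iff_eq_add'.mp h)))))
      · exact Or.inr (Or.inr (Or.inr (Or.inr (Or.inr (sub_eq_iff_eq_add'.mp h)))))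
    exact le_trans (Set.ncard_le_ncard hsub (Set.toFinite _)) (ncard_le_six _ _ _ _ _ _)
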